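/- Let q₁, q₂ be coprime positive integers with 8 ∤ q₁q₂, and let λ(q₁, q₂) be the number of triples (x, y, z) with 1 ≤ x, y, z ≤ q₁q₂ satisfying x²+y²+z²+z+1 ≡ 0 (mod q₁) and x²+y²+z²+z+2 ≡ 0 (mod q₂). Then for every ε > 0, λ(q₁, q₂) ≪_ε (q₁q₂)^{2+ε}. -/

import Mathlib

open Finset

set_option maxHeartbeats 1000000

lemma aux_exp_bound {ε : ℝ} (hε : 0 < ε) :
    ∃ A : ℝ, 1 ≤ A ∧ ∀ a : ℕ, (a + 1 : ℝ) ≤ A * ((2:ℝ) ^ ε) ^ a := by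
  have h2 : (1:ℝ) < (2:ℝ) ^ ε := by
    rw [show (1:ℝ) = (2:ℝ) ^ (0:ℝ) by simp]
    exact Real.rpow_lt_rpow_of_exponent_lt one_lt_two hε
  have hpos : (0:ℝ) < (2:ℝ)^ε - 1 := by linarith
  have h1c : (0:ℝ) < 1 / ((2:ℝ)^ε - 1) := by positivity
  have hcc : (1/((2:ℝ)^ε - 1)) * ((2:ℝ)^ε - 1) = 1 := by field_simp
  refine ⟨1 + 1 / ((2:ℝ)^ε - 1), by linarith, fun a => ?_⟩
  have hb : (1:ℝ) + (a:ℝ) * ((2:ℝ)^ε - 1) ≤ ((2:ℝ)^ε) ^ a := by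
    have h := one_add_mul_le_pow (a := (2:ℝ)^ε - 1) (by linarith) a
    have he : (1 + ((2:ℝ)^ε - 1)) = (2:ℝ)^ε := by ring
    rwa [he] at h
  have hmul := mul_le_mul_of_nonneg_left hb (by linarith : (0:ℝ) ≤ 1 + 1 / ((2:ℝ)^ε - 1))
  have hexp : (1 + 1/((2:ℝ)^ε - 1)) * (1 + (a:ℝ) * ((2:ℝ)^ε - 1))
      = 1 + (a:ℝ)*((2:ℝ)^ε - 1) + 1/((2:ℝ)^ε - 1) + (a:ℝ) * ((1/((2:ℝ)^ε - 1)) * ((2:ℝ)^ε - 1)) := by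
    ring
  rw [hexp, hcc] at hmul
  have hca : (0:ℝ) ≤ (a:ℝ) := Nat.cast_nonneg a
  nlinarith [mul_nonneg hca hpos.le]

lemma divisor_bound {ε : ℝ} (hε : 0 < ε) :
    ∃ C : ℝ, 0 < C ∧ ∀ n : ℕ, 1 ≤ n → (n.divisors.card : ℝ) ≤ C * (n : ℝ) ^ ε := by
  obtain ⟨A, hA1, hAbound⟩ := aux_exp_bound hε
  set K : ℕ := ⌈(2:ℝ) ^ (1/ε)⌉₊ + 1 with hK
  have hKbig : ∀ p : ℕ, K ≤ p → (2:ℝ) ≤ (p:ℝ) ^ ε := by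
    intro p hp
    have h1 : (2:ℝ) ^ (1/ε) ≤ (p:ℝ) := by
      calc (2:ℝ) ^ (1/ε) ≤ (⌈(2:ℝ) ^ (1/ε)⌉₊ : ℝ) := Nat.le_ceil _
        _ ≤ (p:ℝ) := by exact_mod_cast Nat.le_of_succ_le hp
    calc (2:ℝ) = ((2:ℝ) ^ (1/ε)) ^ ε := by
          rw [← Real.rpow_mul (by norm_num : (0:ℝ) ≤ 2), one_div_mul_cancel hε.ne',
            Real.rpow_one]
      _ ≤ (p:ℝ) ^ ε := Real.rpow_le_rpow (by positivity) h1 hε.le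
  refine ⟨A ^ K, by positivity, fun n hn => ?_⟩
  have hn0 : n ≠ 0 := by omega
  have hd : (n.divisors.card : ℝ) = ∏ p ∈ n.primeFactors, ((n.factorization p : ℝ) + 1) := by
    rw [Nat.card_divisors hn0]
    push_cast
    rfl
  have hnε : (n:ℝ) ^ ε = ∏ p ∈ n.primeFactors, ((p:ℝ) ^ ((n.factorization p : ℝ) * ε)) := by
    conv_lhs => rw [← Nat.factorization_prod_pow_eq_self hn0]
    rw [Nat.prod_factorization_eq_prod_primeFactors]
    push_cast
    rw [← Real.finset_prod_rpow _ _ (fun p _ => by positivity)]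
    refine Finset.prod_congr rfl fun p hp => ?_
    rw [← Real.rpow_natCast (p:ℝ) (n.factorization p), ← Real.rpow_mul (by positivity)]
  rw [hd, hnε]
  have key : ∀ p ∈ n.primeFactors,
      ((n.factorization p : ℝ) + 1) ≤
        (if p < K then A else 1) * (p:ℝ) ^ ((n.factorization p : ℝ) * ε) := by
    intro p hp
    have hp2 : 2 ≤ p := (Nat.prime_of_mem_primeFactors hp).two_le
    have hp0 : (0:ℝ) ≤ (p:ℝ) := by positivity
    set a := n.factorization p with ha
    have hrw : ((p:ℝ) ^ ε) ^ a = (p:ℝ) ^ ((a:ℝ) * ε) := by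
      rw [← Real.rpow_natCast ((p:ℝ)^ε) a, ← Real.rpow_mul hp0, mul_comm ε (a:ℝ)]
    by_cases hpK : p < K
    · simp only [hpK, if_true]
      calc ((a:ℝ) + 1) ≤ A * ((2:ℝ)^ε)^a := hAbound a
        _ ≤ A * (p:ℝ) ^ ((a:ℝ) * ε) := by
            rw [← hrw]
            refine mul_le_mul_of_nonneg_left (pow_le_pow_left₀ (by positivity) ?_ a) (by linarith)
            exact Real.rpow_le_rpow (by norm_num) (by exact_mod_cast hp2) hε.le
    · simp only [hpK, if_false, one_mul]
      have h2a : ((a:ℝ) + 1) ≤ ((2:ℝ))^a := by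
        have := (Nat.lt_two_pow_self (n := a))
        have h' : a + 1 ≤ 2^a := this
        exact_mod_cast h'
      calc ((a:ℝ) + 1) ≤ (2:ℝ)^a := h2a
        _ ≤ ((p:ℝ)^ε)^a := pow_le_pow_left₀ (by norm_num) (hKbig p (le_of_not_gt hpK)) a
        _ = (p:ℝ) ^ ((a:ℝ) * ε) := hrw
  calc ∏ p ∈ n.primeFactors, ((n.factorization p : ℝ) + 1)
      ≤ ∏ p ∈ n.primeFactors,
          ((if p < K then A else 1) * (p:ℝ) ^ ((n.factorization p : ℝ) * ε)) :=
        Finset.prod_le_prod (fun p _ => by positivity) key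
    _ = (∏ p ∈ n.primeFactors, (if p < K then A else 1)) *
          ∏ p ∈ n.primeFactors, (p:ℝ) ^ ((n.factorization p : ℝ) * ε) :=
        Finset.prod_mul_distrib
    _ ≤ A ^ K * ∏ p ∈ n.primeFactors, (p:ℝ) ^ ((n.factorization p : ℝ) * ε) := by
        refine mul_le_mul_of_nonneg_right ?_ (Finset.prod_nonneg fun p _ => by positivity)
        rw [Finset.prod_ite]
        simp only [Finset.prod_const, Finset.prod_const_one, mul_one, one_pow]
        have hcard : (n.primeFactors.filter (fun p => p < K)).card ≤ K := by
          calc (n.primeFactors.filter (fun p => p < K)).card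
              ≤ (Finset.range K).card := Finset.card_le_card (fun p hp => by
                simp only [Finset.mem_filter] at hp
                exact Finset.mem_range.mpr hp.2)
            _ = K := Finset.card_range K
        exact pow_le_pow_right₀ hA1 hcard

lemma step_dvd (m s₀ t : ℕ) (hm : 0 < m) (hs : m ∣ s₀^2+1) (ht : m ∣ t^2+1) :
    ((m:ℤ) / (Int.gcd (m:ℤ) ((s₀:ℤ) - t) : ℤ)) ∣ ((s₀:ℤ) + t) := by
  set x : ℤ := (s₀:ℤ) - t with hx
  set d : ℕ := Int.gcd (m:ℤ) x with hd
  have hdpos : 0 < d := Int.gcd_pos_of_ne_zero_left x (by exact_mod_cast hm.ne')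
  have hdm : (d:ℤ) ∣ (m:ℤ) := Int.gcd_dvd_left _ _
  have hdx : (d:ℤ) ∣ x := Int.gcd_dvd_right _ _
  have hmprod : (m:ℤ) ∣ x * ((s₀:ℤ) + t) := by
    have h1 : (m:ℤ) ∣ ((s₀:ℤ)^2 + 1) := by exact_mod_cast Int.natCast_dvd_natCast.mpr hs
    have h2 : (m:ℤ) ∣ ((t:ℤ)^2 + 1) := by exact_mod_cast Int.natCast_dvd_natCast.mpr ht
    have h3 := dvd_sub h1 h2
    have he : ((s₀:ℤ)^2 + 1) - ((t:ℤ)^2 + 1) = x * ((s₀:ℤ) + t) := by rw [hx]; ring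
    rwa [he] at h3
  have hcop : IsCoprime ((m:ℤ)/d) (x/d) := by
    rw [Int.isCoprime_iff_gcd_eq_one]
    exact Int.gcd_div_gcd_div_gcd (by exact_mod_cast hdpos)
  have hm' : (m:ℤ) = (d:ℤ) * ((m:ℤ)/d) := (Int.mul_ediv_cancel' hdm).symm
  have hx' : x = (d:ℤ) * (x/d) := (Int.mul_ediv_cancel' hdx).symm
  have hdvd : ((m:ℤ)/d) ∣ (x/d) * ((s₀:ℤ) + t) := by
    have h : (d:ℤ) * ((m:ℤ)/d) ∣ (d:ℤ) * ((x/d) * ((s₀:ℤ) + t)) := by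
      rw [← hm', ← mul_assoc, ← hx']; exact hmprod
    exact (mul_dvd_mul_iff_left (by exact_mod_cast hdpos.ne' : (d:ℤ) ≠ 0)).mp h
  exact hcop.dvd_of_dvd_mul_left hdvd

lemma pair_dvd (m s₀ t t' : ℕ) (hm : 0 < m) (hs : m ∣ s₀^2+1)
    (ht : m ∣ t^2+1) (ht' : m ∣ t'^2+1)
    (heq : Int.gcd (m:ℤ) ((s₀:ℤ) - t) = Int.gcd (m:ℤ) ((s₀:ℤ) - t')) :
    m ∣ 2 * ((t:ℤ) - t').natAbs := by
  set d : ℕ := Int.gcd (m:ℤ) ((s₀:ℤ) - t) with hd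
  have hdpos : 0 < d := Int.gcd_pos_of_ne_zero_left _ (by exact_mod_cast hm.ne')
  have hdm : (d:ℤ) ∣ (m:ℤ) := Int.gcd_dvd_left _ _
  have hdmn : d ∣ m := by exact_mod_cast hdm
  have h1 : (d:ℤ) ∣ ((t:ℤ) - t') := by
    have a1 : (d:ℤ) ∣ ((s₀:ℤ) - t) := Int.gcd_dvd_right _ _
    have a2 : (d:ℤ) ∣ ((s₀:ℤ) - t') := heq ▸ Int.gcd_dvd_right _ _
    have h3 := dvd_sub a2 a1
    have he : ((s₀:ℤ) - t') - ((s₀:ℤ) - t) = (t:ℤ) - t' := by ring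
    rwa [he] at h3
  set e : ℕ := m / d with he
  have hecast : ((m:ℤ)/(d:ℤ)) = (e:ℤ) := by rw [he]; exact (Int.natCast_div m d).symm
  have h2 : (e:ℤ) ∣ ((t:ℤ) - t') := by
    have a1 := step_dvd m s₀ t hm hs ht
    have a2 := step_dvd m s₀ t' hm hs ht'
    rw [← hd] at a1
    rw [← heq] at a2
    rw [hecast] at a1 a2
    have h3 := dvd_sub a1 a2
    have heq2 : ((s₀:ℤ) + t) - ((s₀:ℤ) + t') = (t:ℤ) - t' := by ring
    rwa [heq2] at h3
  set A : ℕ := ((t:ℤ) - t').natAbs with hA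
  have hdA : d ∣ A := Int.natCast_dvd_natCast.mp (Int.dvd_natAbs.mpr h1)
  have heA : e ∣ A := Int.natCast_dvd_natCast.mp (Int.dvd_natAbs.mpr h2)
  set g : ℕ := Nat.gcd d e with hg
  have hg2 : g ∣ 2 := by
    have b1a : (g:ℤ) ∣ (d:ℤ) := Int.natCast_dvd_natCast.mpr (Nat.gcd_dvd_left d e)
    have b1b : (d:ℤ) ∣ ((s₀:ℤ) - t) := by rw [hd]; exact Int.gcd_dvd_right _ _
    have b1 : (g:ℤ) ∣ ((s₀:ℤ) - t) := b1a.trans b1b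
    have b2 : (g:ℤ) ∣ ((s₀:ℤ) + t) := by
      have a1 := step_dvd m s₀ t hm hs ht
      rw [← hd, hecast] at a1
      exact dvd_trans (Int.natCast_dvd_natCast.mpr (Nat.gcd_dvd_right d e)) a1
    have b3 := dvd_add b2 b1
    have he2 : ((s₀:ℤ) + t) + ((s₀:ℤ) - t) = 2 * (s₀:ℤ) := by ring
    rw [he2] at b3
    have hgs' : g ∣ 2 * s₀ := by exact_mod_cast b3
    have hcopm : Nat.Coprime m s₀ := by
      have c1 : Nat.gcd m s₀ ∣ s₀^2 := Dvd.dvd.pow (Nat.gcd_dvd_right m s₀) (by norm_num)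
      have c2 : Nat.gcd m s₀ ∣ s₀^2 + 1 := dvd_trans (Nat.gcd_dvd_left m s₀) hs
      have c3 : Nat.gcd m s₀ ∣ 1 := by
        have c4 := Nat.dvd_sub c2 c1
        simpa using c4
      exact Nat.dvd_one.mp c3
    have hcopg : Nat.Coprime g s₀ :=
      Nat.Coprime.coprime_dvd_left (dvd_trans (Nat.gcd_dvd_left d e) hdmn) hcopm
    exact hcopg.dvd_of_dvd_mul_right hgs'
  have hlcm : Nat.lcm d e ∣ A := Nat.lcm_dvd hdA heA
  have hde : d * e = m := Nat.mul_div_cancel' hdmn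
  have hmgl : m = g * Nat.lcm d e := by rw [← hde, ← Nat.gcd_mul_lcm d e]
  calc m = g * Nat.lcm d e := hmgl
    _ ∣ g * A := mul_dvd_mul_left g hlcm
    _ ∣ 2 * A := mul_dvd_mul_right hg2 A

lemma roots_card_le (m : ℕ) (hm : 0 < m) :
    ((Finset.range m).filter fun t => m ∣ t^2+1).card ≤ 2 * m.divisors.card := by
  set T := (Finset.range m).filter fun t => m ∣ t^2+1 with hT
  rcases T.eq_empty_or_nonempty with h | ⟨s₀, hs₀⟩
  · simp [h]
  have hs₀' := Finset.mem_filter.mp hs₀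
  have hs : m ∣ s₀^2 + 1 := hs₀'.2
  set f : ℕ → ℕ := fun t => Int.gcd (m:ℤ) ((s₀:ℤ) - t) with hf
  have hmaps : ∀ t ∈ T, f t ∈ m.divisors := by
    intro t ht
    rw [Nat.mem_divisors]
    have : (Int.gcd (m:ℤ) ((s₀:ℤ) - t)) ∣ m :=
      Int.natCast_dvd_natCast.mp (Int.gcd_dvd_left _ _)
    exact ⟨this, hm.ne'⟩
  have hfib : ∀ a ∈ m.divisors, (T.filter fun t => f t = a).card ≤ 2 := by
    intro a _
    set F := T.filter fun t => f t = a with hF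
    rcases F.eq_empty_or_nonempty with h | hne
    · simp [h]
    have hkey : ∀ t ∈ F, ∀ u ∈ F, m ∣ 2 * ((t:ℤ) - u).natAbs := by
      intro t ht u hu
      have ht' := Finset.mem_filter.mp (Finset.mem_filter.mp ht).1
      have hu' := Finset.mem_filter.mp (Finset.mem_filter.mp hu).1
      have hft := (Finset.mem_filter.mp ht).2
      have hfu := (Finset.mem_filter.mp hu).2
      exact pair_dvd m s₀ t u hm hs ht'.2 hu'.2 (by show f t = f u; rw [hft, hfu])
    set t₀ := F.min' hne with ht₀
    have ht₀F : t₀ ∈ F := F.min'_mem hne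
    have hsub : F ⊆ {t₀, (2*t₀ + m)/2} := by
      intro t ht
      have hmin : t₀ ≤ t := F.min'_le t ht
      have hlt : t < m := Finset.mem_range.mp
        (Finset.mem_filter.mp (Finset.mem_filter.mp ht).1).1
      have hdvd := hkey t ht t₀ ht₀F
      have hab : ((t:ℤ) - t₀).natAbs = t - t₀ := by omega
      rw [hab] at hdvd
      obtain ⟨c, hc⟩ := hdvd
      have hclt : c < 2 := by
        rcases Nat.lt_or_ge c 2 with h | h
        · exact h
        · exfalso
          have h2 : m * 2 ≤ m * c := Nat.mul_le_mul_left m h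
          omega
      simp only [Finset.mem_insert, Finset.mem_singleton]
      interval_cases c <;> omega
    calc F.card ≤ ({t₀, (2*t₀ + m)/2} : Finset ℕ).card := Finset.card_le_card hsub
      _ ≤ 2 := Finset.card_insert_le _ _ |>.trans (by simp)
  calc T.card ≤ 2 * (m.divisors).card :=
    Finset.card_le_mul_card_image_of_maps_to hmaps 2 hfib

lemma primreps_card_le (n : ℕ) (hn : 1 ≤ n) (P : Finset (ℕ × ℕ))
    (hP : ∀ p ∈ P, 1 ≤ p.1 ∧ 1 ≤ p.2 ∧ p.1^2 + p.2^2 = n ∧ Nat.gcd p.1 p.2 = 1) :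
    P.card ≤ 2 * n.divisors.card := by
  haveI : NeZero n := ⟨by omega⟩
  classical
  set T := (Finset.range n).filter (fun t => n ∣ t^2+1) with hT
  set φ : ℕ × ℕ → ℕ := fun p => ((p.1 : ZMod n) * (p.2 : ZMod n)⁻¹).val with hφ
  have hycop : ∀ p ∈ P, Nat.Coprime p.2 n := by
    intro p hp
    obtain ⟨hx1, hy1, hsum, hcop⟩ := hP p hp
    have a1 : Nat.gcd p.2 n ∣ p.2^2 := dvd_pow (Nat.gcd_dvd_left _ _) two_ne_zero
    have a2 : Nat.gcd p.2 n ∣ p.1^2 + p.2^2 := by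
      rw [hsum]; exact Nat.gcd_dvd_right _ _
    have d1 : Nat.gcd p.2 n ∣ p.1^2 := by
      have := Nat.dvd_sub a2 a1
      simpa using this
    have d2 : Nat.gcd p.2 n ∣ Nat.gcd (p.1^2) p.2 :=
      Nat.dvd_gcd d1 (Nat.gcd_dvd_left _ _)
    have d3 : Nat.gcd (p.1^2) p.2 = 1 := Nat.Coprime.pow_left 2 hcop
    rw [d3] at d2
    exact Nat.dvd_one.mp d2
  have hmem : ∀ p ∈ P, φ p ∈ T := by
    intro p hp
    obtain ⟨hx1, hy1, hsum, hcop⟩ := hP p hp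
    have hyunit : IsUnit ((p.2 : ZMod n)) := (ZMod.isUnit_iff_coprime p.2 n).mpr (hycop p hp)
    set u : ZMod n := (p.1 : ZMod n) * (p.2 : ZMod n)⁻¹ with hu
    have hyy : (p.2 : ZMod n) * (p.2 : ZMod n)⁻¹ = 1 := ZMod.mul_inv_of_unit _ hyunit
    have hx0 : (p.1 : ZMod n)^2 + (p.2 : ZMod n)^2 = 0 := by
      have h := congrArg (fun v : ℕ => (v : ZMod n)) hsum
      push_cast at h
      simpa using h
    have hu2 : u^2 + 1 = 0 := by
      have e1 : ((p.1 : ZMod n)^2 + (p.2 : ZMod n)^2) * ((p.2 : ZMod n)⁻¹)^2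
          = u^2 + ((p.2 : ZMod n) * (p.2 : ZMod n)⁻¹)^2 := by rw [hu]; ring
      rw [hyy, one_pow, hx0, zero_mul] at e1
      exact e1.symm
    rw [hT, Finset.mem_filter, Finset.mem_range]
    refine ⟨ZMod.val_lt u, ?_⟩
    rw [← ZMod.natCast_eq_zero_iff]
    push_cast
    have hvu : ((u.val : ℕ) : ZMod n) = u := by rw [ZMod.natCast_val, ZMod.cast_id]
    show ((u.val : ZMod n))^2 + 1 = 0
    rw [hvu, hu2]
  have hinj : Set.InjOn φ P := by
    intro p hp p' hp' hfeq
    obtain ⟨hx1, hy1, hsum, hcop⟩ := hP p hp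
    obtain ⟨hx1', hy1', hsum', hcop'⟩ := hP p' hp'
    have hyu : IsUnit ((p.2 : ZMod n)) := (ZMod.isUnit_iff_coprime p.2 n).mpr (hycop p hp)
    have hyu' : IsUnit ((p'.2 : ZMod n)) := (ZMod.isUnit_iff_coprime p'.2 n).mpr (hycop p' hp')
    have hyy : (p.2 : ZMod n) * (p.2 : ZMod n)⁻¹ = 1 := ZMod.mul_inv_of_unit _ hyu
    have hyy' : (p'.2 : ZMod n) * (p'.2 : ZMod n)⁻¹ = 1 := ZMod.mul_inv_of_unit _ hyu'
    have hueq : (p.1 : ZMod n) * (p.2 : ZMod n)⁻¹ = (p'.1 : ZMod n) * (p'.2 : ZMod n)⁻¹ := by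
      have h := congrArg (fun v : ℕ => (v : ZMod n)) hfeq
      simp only [hφ] at h
      rwa [ZMod.natCast_val, ZMod.cast_id, ZMod.natCast_val, ZMod.cast_id] at h
    have hcross : (p.1 : ZMod n) * (p'.2 : ZMod n) = (p'.1 : ZMod n) * (p.2 : ZMod n) := by
      have h1 : (p.1 : ZMod n) * (p.2 : ZMod n)⁻¹ * ((p.2 : ZMod n) * (p'.2 : ZMod n))
          = (p'.1 : ZMod n) * (p'.2 : ZMod n)⁻¹ * ((p.2 : ZMod n) * (p'.2 : ZMod n)) := by
        rw [hueq]
      have e2 : (p.1 : ZMod n) * (p.2 : ZMod n)⁻¹ * ((p.2 : ZMod n) * (p'.2 : ZMod n))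
          = (p.1 : ZMod n) * (p'.2 : ZMod n) * ((p.2 : ZMod n) * (p.2 : ZMod n)⁻¹) := by ring
      have e3 : (p'.1 : ZMod n) * (p'.2 : ZMod n)⁻¹ * ((p.2 : ZMod n) * (p'.2 : ZMod n))
          = (p'.1 : ZMod n) * (p.2 : ZMod n) * ((p'.2 : ZMod n) * (p'.2 : ZMod n)⁻¹) := by ring
      rw [e2, e3, hyy, hyy', mul_one, mul_one] at h1
      exact h1
    have hmod : p.1 * p'.2 ≡ p'.1 * p.2 [MOD n] := by
      rw [← ZMod.natCast_eq_natCast_iff]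
      push_cast
      exact hcross
    have hdvd : (n:ℤ) ∣ ((p'.1 * p.2 : ℕ) : ℤ) - ((p.1 * p'.2 : ℕ) : ℤ) := hmod.dvd
    set D : ℤ := ((p'.1 : ℤ) * p.2) - ((p.1 : ℤ) * p'.2) with hD
    have hdvd' : (n:ℤ) ∣ D := by
      have : ((p'.1 * p.2 : ℕ) : ℤ) - ((p.1 * p'.2 : ℕ) : ℤ) = D := by push_cast; ring
      rwa [this] at hdvd
    have hsZ : ((p.1 : ℤ))^2 + ((p.2 : ℤ))^2 = (n:ℤ) := by exact_mod_cast congrArg (Nat.cast : ℕ → ℤ) hsum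
    have hsZ' : ((p'.1 : ℤ))^2 + ((p'.2 : ℤ))^2 = (n:ℤ) := by exact_mod_cast congrArg (Nat.cast : ℕ → ℤ) hsum'
    have hid : D^2 + ((p.1 : ℤ) * p'.1 + (p.2 : ℤ) * p'.2)^2 = (n:ℤ)^2 := by
      have : D^2 + ((p.1 : ℤ) * p'.1 + (p.2 : ℤ) * p'.2)^2
          = (((p.1 : ℤ))^2 + ((p.2 : ℤ))^2) * (((p'.1 : ℤ))^2 + ((p'.2 : ℤ))^2) := by
        rw [hD]; ring
      rw [this, hsZ, hsZ']; ring
    have hX2 : (2:ℤ) ≤ (p.1 : ℤ) * p'.1 + (p.2 : ℤ) * p'.2 := by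
      have a1 : (1:ℤ) ≤ (p.1 : ℤ) := by exact_mod_cast hx1
      have a2 : (1:ℤ) ≤ (p'.1 : ℤ) := by exact_mod_cast hx1'
      have a3 : (1:ℤ) ≤ (p.2 : ℤ) := by exact_mod_cast hy1
      have a4 : (1:ℤ) ≤ (p'.2 : ℤ) := by exact_mod_cast hy1'
      nlinarith
    have hnpos : (0:ℤ) < n := by exact_mod_cast (by omega : 0 < n)
    have hDlt : |D| < (n:ℤ) := by
      have hsq : D^2 < (n:ℤ)^2 := by nlinarith [sq_nonneg ((p.1 : ℤ) * p'.1 + (p.2 : ℤ) * p'.2)]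
      refine abs_lt.mpr ⟨?_, ?_⟩
      · nlinarith [sq_nonneg (D + (n:ℤ))]
      · nlinarith [sq_nonneg (D - (n:ℤ))]
    have hD0 : D = 0 := Int.eq_zero_of_abs_lt_dvd hdvd' hDlt
    have hnat : p'.1 * p.2 = p.1 * p'.2 := by
      have : ((p'.1 * p.2 : ℕ) : ℤ) = ((p.1 * p'.2 : ℕ) : ℤ) := by push_cast; omega
      exact_mod_cast this
    have hy2 : p.2 = p'.2 := by
      have c1 : Nat.Coprime p.2 p.1 := (Nat.coprime_comm.mp hcop)
      have c1' : Nat.Coprime p'.2 p'.1 := (Nat.coprime_comm.mp hcop')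
      have hd1 : p.2 ∣ p'.2 := by
        refine c1.dvd_of_dvd_mul_left ?_
        rw [← hnat]
        exact Dvd.intro_left p'.1 rfl
      have hd2 : p'.2 ∣ p.2 := by
        refine c1'.dvd_of_dvd_mul_left ?_
        rw [hnat]
        exact Dvd.intro_left p.1 rfl
      exact Nat.dvd_antisymm hd1 hd2
    have hx2 : p.1 = p'.1 := by
      have := hnat
      rw [hy2] at this
      exact (Nat.eq_of_mul_eq_mul_right (by omega) this).symm
    exact Prod.ext hx2 hy2
  calc P.card ≤ T.card := Finset.card_le_card_of_injOn φ hmem hinj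
    _ ≤ 2 * n.divisors.card := roots_card_le n (by omega)

lemma reps_card_le (n : ℕ) (hn : 1 ≤ n) (R : Finset (ℕ × ℕ))
    (hR : ∀ p ∈ R, 1 ≤ p.1 ∧ 1 ≤ p.2 ∧ p.1^2 + p.2^2 = n) :
    R.card ≤ 2 * n.divisors.card ^ 2 := by
  classical
  have hn0 : n ≠ 0 := by omega
  set f : ℕ × ℕ → ℕ := fun p => Nat.gcd p.1 p.2 with hf
  have hmaps : ∀ p ∈ R, f p ∈ n.divisors := by
    intro p hp
    obtain ⟨hx1, hy1, hsum⟩ := hR p hp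
    have hsq : (f p)^2 ∣ n := by
      rw [← hsum]
      exact dvd_add (pow_dvd_pow_of_dvd (Nat.gcd_dvd_left _ _) 2)
        (pow_dvd_pow_of_dvd (Nat.gcd_dvd_right _ _) 2)
    exact Nat.mem_divisors.mpr ⟨dvd_trans (dvd_pow_self (f p) two_ne_zero) hsq, hn0⟩
  refine (Finset.card_le_mul_card_image_of_maps_to hmaps (2 * n.divisors.card) ?_).trans ?_
  · intro g hg
    set F := R.filter fun p => f p = g with hF
    rcases F.eq_empty_or_nonempty with h | hne
    · simp [h]
    -- g ≥ 1, g^2 ∣ n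
    obtain ⟨p₀, hp₀⟩ := hne
    have hp₀R := (Finset.mem_filter.mp hp₀).1
    have hp₀g : f p₀ = g := (Finset.mem_filter.mp hp₀).2
    obtain ⟨hx0, hy0, hsum0⟩ := hR p₀ hp₀R
    have hg1 : 1 ≤ g := by
      rcases Nat.eq_zero_or_pos g with h0 | h1
      · exfalso
        rw [h0] at hp₀g
        have := Nat.eq_zero_of_gcd_eq_zero_left hp₀g
        omega
      · exact h1
    have hgsq : g^2 ∣ n := by
      rw [← hsum0, ← hp₀g]
      exact dvd_add (pow_dvd_pow_of_dvd (Nat.gcd_dvd_left _ _) 2)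
        (pow_dvd_pow_of_dvd (Nat.gcd_dvd_right _ _) 2)
    set m := n / g^2 with hm
    have hmn : g^2 * m = n := Nat.mul_div_cancel' hgsq
    have hm1 : 1 ≤ m := by
      rcases Nat.eq_zero_or_pos m with h0 | h1
      · exfalso; rw [h0, mul_zero] at hmn; omega
      · exact h1
    -- map F into primitive reps of m
    set ψ : ℕ × ℕ → ℕ × ℕ := fun p => (p.1 / g, p.2 / g) with hψ
    have hinj : Set.InjOn ψ F := by
      intro p hp q hq heq
      have hpg : f p = g := (Finset.mem_filter.mp hp).2
      have hqg : f q = g := (Finset.mem_filter.mp hq).2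
      have h1 : g ∣ p.1 := hpg ▸ Nat.gcd_dvd_left _ _
      have h2 : g ∣ p.2 := hpg ▸ Nat.gcd_dvd_right _ _
      have h3 : g ∣ q.1 := hqg ▸ Nat.gcd_dvd_left _ _
      have h4 : g ∣ q.2 := hqg ▸ Nat.gcd_dvd_right _ _
      have e1 : p.1 / g = q.1 / g := congrArg Prod.fst heq
      have e2 : p.2 / g = q.2 / g := congrArg Prod.snd heq
      have : p.1 = q.1 := by
        rw [← Nat.div_mul_cancel h1, ← Nat.div_mul_cancel h3, e1]
      have h5 : p.2 = q.2 := by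
        rw [← Nat.div_mul_cancel h2, ← Nat.div_mul_cancel h4, e2]
      exact Prod.ext this h5
    have hcard : F.card = (F.image ψ).card := (Finset.card_image_of_injOn hinj).symm
    have himg : ∀ r ∈ F.image ψ, 1 ≤ r.1 ∧ 1 ≤ r.2 ∧ r.1^2 + r.2^2 = m ∧ Nat.gcd r.1 r.2 = 1 := by
      intro r hr
      obtain ⟨p, hp, hpr⟩ := Finset.mem_image.mp hr
      have hpR := (Finset.mem_filter.mp hp).1
      have hpg : f p = g := (Finset.mem_filter.mp hp).2
      obtain ⟨hx1, hy1, hsum⟩ := hR p hpR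
      have h1 : g ∣ p.1 := hpg ▸ Nat.gcd_dvd_left _ _
      have h2 : g ∣ p.2 := hpg ▸ Nat.gcd_dvd_right _ _
      have hr1 : r.1 = p.1 / g := by rw [← hpr]
      have hr2 : r.2 = p.2 / g := by rw [← hpr]
      have hx1' : 1 ≤ p.1 / g := Nat.one_le_div_iff (by omega) |>.mpr (Nat.le_of_dvd (by omega) h1)
      have hy1' : 1 ≤ p.2 / g := Nat.one_le_div_iff (by omega) |>.mpr (Nat.le_of_dvd (by omega) h2)
      have hsum' : (p.1/g)^2 + (p.2/g)^2 = m := by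
        have hmul : g^2 * ((p.1/g)^2 + (p.2/g)^2) = g^2 * m := by
          calc g^2 * ((p.1/g)^2 + (p.2/g)^2) = (g*(p.1/g))^2 + (g*(p.2/g))^2 := by ring
            _ = p.1^2 + p.2^2 := by rw [Nat.mul_div_cancel' h1, Nat.mul_div_cancel' h2]
            _ = n := hsum
            _ = g^2 * m := hmn.symm
        exact Nat.eq_of_mul_eq_mul_left (by positivity) hmul
      have hcop : Nat.gcd (p.1/g) (p.2/g) = 1 := by
        conv_lhs => rw [← hpg]
        exact Nat.coprime_div_gcd_div_gcd
          (Nat.pos_of_ne_zero fun h0 => by have := Nat.eq_zero_of_gcd_eq_zero_left h0; omega)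
      rw [hr1, hr2]
      exact ⟨hx1', hy1', hsum', hcop⟩
    have hm_dvd_n : m ∣ n := ⟨g^2, by rw [mul_comm]; exact hmn.symm⟩
    calc F.card = (F.image ψ).card := hcard
      _ ≤ 2 * m.divisors.card := primreps_card_le m hm1 (F.image ψ) himg
      _ ≤ 2 * n.divisors.card := by
          have := Finset.card_le_card (Nat.divisors_subset_of_dvd hn0 hm_dvd_n)
          omega
  · exact le_of_eq (by ring)

/-- λ(q₁, q₂): the number of triples (x,y,z), 1 ≤ x,y,z ≤ q₁q₂, with
x²+y²+z²+z+1 ≡ 0 (mod q₁) and x²+y²+z²+z+2 ≡ 0 (mod q₂). -/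
def lamCount (q₁ q₂ : ℕ) : ℕ :=
  (((Finset.Icc 1 (q₁ * q₂)) ×ˢ (Finset.Icc 1 (q₁ * q₂)) ×ˢ (Finset.Icc 1 (q₁ * q₂))).filter
    (fun p => q₁ ∣ (p.1 ^ 2 + p.2.1 ^ 2 + p.2.2 ^ 2 + p.2.2 + 1) ∧
      q₂ ∣ (p.1 ^ 2 + p.2.1 ^ 2 + p.2.2 ^ 2 + p.2.2 + 2))).card

lemma count_le (q₁ q₂ : ℕ) (h₁ : 0 < q₁) (h₂ : 0 < q₂) (hco : Nat.Coprime q₁ q₂) :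
    lamCount q₁ q₂ ≤ 6 * (q₁*q₂)^2 *
      ((Finset.range (2*(q₁*q₂)^2+1)).sup (fun k => k.divisors.card))^2 := by
  classical
  set q := q₁ * q₂ with hq
  have hqpos : 0 < q := Nat.mul_pos h₁ h₂
  set D := (Finset.range (2*q^2+1)).sup (fun k => k.divisors.card) with hD
  set S := ((Finset.Icc 1 q ×ˢ (Finset.Icc 1 q ×ˢ Finset.Icc 1 q)).filter
    (fun p : ℕ × ℕ × ℕ => q₁ ∣ (p.1^2 + p.2.1^2 + p.2.2^2 + p.2.2 + 1) ∧
      q₂ ∣ (p.1^2 + p.2.1^2 + p.2.2^2 + p.2.2 + 2))) with hS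
  have hlam : lamCount q₁ q₂ = S.card := rfl
  have hSmem : ∀ p ∈ S, (1 ≤ p.1 ∧ p.1 ≤ q) ∧ (1 ≤ p.2.1 ∧ p.2.1 ≤ q) ∧
      (1 ≤ p.2.2 ∧ p.2.2 ≤ q) ∧ q₁ ∣ (p.1^2 + p.2.1^2 + p.2.2^2 + p.2.2 + 1) ∧
      q₂ ∣ (p.1^2 + p.2.1^2 + p.2.2^2 + p.2.2 + 2) := by
    intro p hp
    simp only [hS, Finset.mem_filter, Finset.mem_product, Finset.mem_Icc] at hp
    tauto
  have hstep1 : S.card = ∑ z ∈ Finset.Icc 1 q, (S.filter (fun p => p.2.2 = z)).card :=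
    Finset.card_eq_sum_card_fiberwise (fun p hp => Finset.mem_Icc.mpr (hSmem p hp).2.2.1)
  have hzbound : ∀ z ∈ Finset.Icc 1 q,
      (S.filter (fun p => p.2.2 = z)).card ≤ (2*D^2) * (2*q+1) := by
    intro z hz
    set Sz := S.filter (fun p => p.2.2 = z) with hSz
    set w : ℕ × ℕ × ℕ → ℕ := fun p => p.1^2 + p.2.1^2 with hw
    have hwle : ∀ p ∈ Sz, w p ≤ 2*q^2 := by
      intro p hp
      have h := hSmem p (Finset.mem_filter.mp hp).1
      have e1 : p.1^2 ≤ q^2 := Nat.pow_le_pow_left h.1.2 2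
      have e2 : p.2.1^2 ≤ q^2 := Nat.pow_le_pow_left h.2.1.2 2
      simp only [hw]
      omega
    -- fiber bound
    have hfib : ∀ a ∈ Sz.image w, (Sz.filter (fun p => w p = a)).card ≤ 2*D^2 := by
      intro a ha
      obtain ⟨p₀, hp₀, hwp₀⟩ := Finset.mem_image.mp ha
      have h₀ := hSmem p₀ (Finset.mem_filter.mp hp₀).1
      have ha1 : 1 ≤ a := by
        rw [← hwp₀]
        have : 1 ≤ p₀.1^2 := Nat.one_le_pow _ _ (by omega)
        simp only [hw]
        omega
      have ha2 : a ≤ 2*q^2 := hwp₀ ▸ hwle p₀ hp₀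
      set Fib := Sz.filter (fun p => w p = a) with hF
      set π : ℕ × ℕ × ℕ → ℕ × ℕ := fun p => (p.1, p.2.1) with hπ
      have hzz : ∀ p ∈ Fib, p.2.2 = z := by
        intro p hp
        exact (Finset.mem_filter.mp (Finset.mem_filter.mp hp).1).2
      have hinj : Set.InjOn π Fib := by
        intro p hp p' hp' heq
        simp only [hπ, Prod.mk.injEq] at heq
        obtain ⟨e1, e2⟩ := heq
        have e3 : p.2.2 = p'.2.2 := by rw [hzz p hp, hzz p' hp']
        exact Prod.ext e1 (Prod.ext e2 e3)
      have hcard : Fib.card = (Fib.image π).card := (Finset.card_image_of_injOn hinj).symm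
      have himg : ∀ r ∈ Fib.image π, 1 ≤ r.1 ∧ 1 ≤ r.2 ∧ r.1^2 + r.2^2 = a := by
        intro r hr
        obtain ⟨p, hp, hpr⟩ := Finset.mem_image.mp hr
        have h := hSmem p (Finset.mem_filter.mp (Finset.mem_filter.mp hp).1).1
        have hwa : w p = a := (Finset.mem_filter.mp hp).2
        have hr1 : r.1 = p.1 := by rw [← hpr]
        have hr2 : r.2 = p.2.1 := by rw [← hpr]
        refine ⟨?_, ?_, ?_⟩
        · rw [hr1]; exact h.1.1
        · rw [hr2]; exact h.2.1.1
        · rw [hr1, hr2, ← hwa]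
      have hda : a.divisors.card ≤ D := by
        rw [hD]
        exact Finset.le_sup (f := fun k => k.divisors.card)
          (Finset.mem_range.mpr (Nat.lt_succ_of_le ha2))
      calc Fib.card = (Fib.image π).card := hcard
        _ ≤ 2 * a.divisors.card ^ 2 := reps_card_le a ha1 _ himg
        _ ≤ 2 * D^2 := by
            have := Nat.pow_le_pow_left hda 2
            omega
    have himgcard : (Sz.image w).card ≤ 2*q+1 := by
      have hcond : ∀ p ∈ Sz, q₁ ∣ w p + (z^2 + z + 1) ∧ q₂ ∣ w p + (z^2 + z + 2) := by
        intro p hp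
        have h := hSmem p (Finset.mem_filter.mp hp).1
        have hpz : p.2.2 = z := (Finset.mem_filter.mp hp).2
        have e1 : p.1^2 + p.2.1^2 + p.2.2^2 + p.2.2 + 1 = w p + (z^2 + z + 1) := by
          simp only [hw, hpz]; omega
        have e2 : p.1^2 + p.2.1^2 + p.2.2^2 + p.2.2 + 2 = w p + (z^2 + z + 2) := by
          simp only [hw, hpz]; omega
        exact ⟨e1 ▸ h.2.2.2.1, e2 ▸ h.2.2.2.2⟩
      have hcr : (Sz.image w).card ≤ (Finset.range (2*q+1)).card := by
        refine Finset.card_le_card_of_injOn (fun n => n / q) ?_ ?_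
        · intro n hn
          obtain ⟨p, hp, hwp⟩ := Finset.mem_image.mp hn
          have : n ≤ 2*q^2 := hwp ▸ hwle p hp
          refine Finset.mem_range.mpr (show n / q < 2*q+1 from ?_)
          have h1 : n / q ≤ (2*q^2) / q := Nat.div_le_div_right this
          have h2 : (2*q^2) / q = 2*q := by
            rw [show 2*q^2 = (2*q)*q by ring]
            exact Nat.mul_div_cancel _ hqpos
          omega
        · intro n hn n' hn' hdiv
          have hdiv' : n / q = n' / q := hdiv
          simp only [Finset.coe_image, Set.mem_image, Finset.mem_coe] at hn hn'
          obtain ⟨p, hp, hwp⟩ := hn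
          obtain ⟨p', hp', hwp'⟩ := hn'
          have hc := hcond p hp
          have hc' := hcond p' hp'
          rw [hwp] at hc
          rw [hwp'] at hc'
          have h1 : (q₁:ℤ) ∣ (n:ℤ) - n' := by
            have a1 : (q₁:ℤ) ∣ ((n + (z^2+z+1) : ℕ) : ℤ) := Int.natCast_dvd_natCast.mpr hc.1
            have a2 : (q₁:ℤ) ∣ ((n' + (z^2+z+1) : ℕ) : ℤ) := Int.natCast_dvd_natCast.mpr hc'.1
            have h3 := dvd_sub a1 a2
            have e : ((n + (z^2+z+1) : ℕ) : ℤ) - ((n' + (z^2+z+1) : ℕ) : ℤ) = (n:ℤ) - n' := by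
              push_cast; ring
            rwa [e] at h3
          have h2 : (q₂:ℤ) ∣ (n:ℤ) - n' := by
            have a1 : (q₂:ℤ) ∣ ((n + (z^2+z+2) : ℕ) : ℤ) := Int.natCast_dvd_natCast.mpr hc.2
            have a2 : (q₂:ℤ) ∣ ((n' + (z^2+z+2) : ℕ) : ℤ) := Int.natCast_dvd_natCast.mpr hc'.2
            have h3 := dvd_sub a1 a2
            have e : ((n + (z^2+z+2) : ℕ) : ℤ) - ((n' + (z^2+z+2) : ℕ) : ℤ) = (n:ℤ) - n' := by
              push_cast; ring
            rwa [e] at h3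
          have hcopZ : IsCoprime (q₁:ℤ) (q₂:ℤ) := by
            rw [Int.isCoprime_iff_gcd_eq_one, Int.gcd_natCast_natCast]
            exact hco
          have hqd : (q:ℤ) ∣ (n:ℤ) - n' := by
            rw [hq]
            push_cast
            exact hcopZ.mul_dvd h1 h2
          have hr1 : q * (n / q) + n % q = n := Nat.div_add_mod n q
          have hr2 : q * (n' / q) + n' % q = n' := Nat.div_add_mod n' q
          rw [hdiv'] at hr1
          generalize hu : q * (n' / q) = u at hr1 hr2
          have hm1 : n % q < q := Nat.mod_lt _ hqpos
          have hm2 : n' % q < q := Nat.mod_lt _ hqpos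
          have habs : |(n:ℤ) - n'| < (q:ℤ) := abs_lt.mpr ⟨by omega, by omega⟩
          have h0 := Int.eq_zero_of_abs_lt_dvd hqd habs
          omega
      calc (Sz.image w).card ≤ (Finset.range (2*q+1)).card := hcr
        _ = 2*q+1 := Finset.card_range _
    calc Sz.card ≤ 2*D^2 * (Sz.image w).card := Finset.card_le_mul_card_image Sz _ hfib
      _ ≤ (2*D^2) * (2*q+1) := Nat.mul_le_mul_left _ himgcard
  rw [hlam, hstep1]
  calc ∑ z ∈ Finset.Icc 1 q, (S.filter (fun p => p.2.2 = z)).card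
      ≤ (Finset.Icc 1 q).card * ((2*D^2) * (2*q+1)) := by
        rw [← smul_eq_mul]
        exact Finset.sum_le_card_nsmul _ _ _ hzbound
    _ = q * ((2*D^2) * (2*q+1)) := by rw [Nat.card_Icc]; norm_num
    _ = 4*(D^2*q^2) + 2*(D^2*q) := by ring
    _ ≤ 4*(D^2*q^2) + 2*(D^2*q^2) := by
        have hq2 : q ≤ q^2 := by nlinarith [hqpos]
        have := Nat.mul_le_mul_left (D^2) hq2
        omega
    _ = 6*q^2*D^2 := by ring

theorem lamCount_bound (ε : ℝ) (hε : 0 < ε) :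
    ∃ C : ℝ, 0 < C ∧ ∀ q₁ q₂ : ℕ, 0 < q₁ → 0 < q₂ → Nat.Coprime q₁ q₂ →
      ¬ (8 ∣ q₁ * q₂) →
        (lamCount q₁ q₂ : ℝ) ≤ C * ((q₁ * q₂ : ℕ) : ℝ) ^ ((2 : ℝ) + ε) := by
  obtain ⟨C₀, hC₀, hdb⟩ := divisor_bound (show (0:ℝ) < ε/4 by linarith)
  refine ⟨6 * C₀^2 * (2:ℝ)^(ε/2), by positivity, ?_⟩
  intro q₁ q₂ h₁ h₂ hco _
  set q := q₁ * q₂ with hq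
  have hqpos : 0 < q := Nat.mul_pos h₁ h₂
  set D := (Finset.range (2*q^2+1)).sup (fun k => k.divisors.card) with hD
  have hcount := count_le q₁ q₂ h₁ h₂ hco
  have hcast : (lamCount q₁ q₂ : ℝ) ≤ 6 * (q:ℝ)^2 * (D:ℝ)^2 := by exact_mod_cast hcount
  have hDle : (D:ℝ) ≤ C₀ * ((2:ℝ) * (q:ℝ)^2) ^ (ε/4) := by
    obtain ⟨k₀, hk₀mem, hk₀⟩ := Finset.exists_mem_eq_sup (Finset.range (2*q^2+1))
      ⟨0, Finset.mem_range.mpr (by omega)⟩ (fun k => k.divisors.card)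
    rw [hD, hk₀]
    rcases Nat.eq_zero_or_pos k₀ with h0 | hpos
    · simp only [h0, Nat.divisors_zero, Finset.card_empty, Nat.cast_zero]
      positivity
    · have hk₀le : (k₀:ℝ) ≤ (2:ℝ) * (q:ℝ)^2 := by
        have hmr := Finset.mem_range.mp hk₀mem
        have hle : k₀ ≤ 2*q^2 := by omega
        calc (k₀:ℝ) ≤ ((2*q^2 : ℕ) : ℝ) := by exact_mod_cast hle
          _ = (2:ℝ) * (q:ℝ)^2 := by push_cast; ring
      calc ((k₀.divisors.card : ℝ)) ≤ C₀ * (k₀:ℝ)^(ε/4) := hdb k₀ hpos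
        _ ≤ C₀ * ((2:ℝ)*(q:ℝ)^2)^(ε/4) := by
            refine mul_le_mul_of_nonneg_left ?_ hC₀.le
            exact Real.rpow_le_rpow (by positivity) hk₀le (by linarith)
  have hq0 : (0:ℝ) < (q:ℝ) := by exact_mod_cast hqpos
  have hD0 : (0:ℝ) ≤ (D:ℝ) := Nat.cast_nonneg D
  have hsq : (D:ℝ)^2 ≤ (C₀ * ((2:ℝ)*(q:ℝ)^2)^(ε/4))^2 := pow_le_pow_left₀ hD0 hDle 2
  have hfin : (lamCount q₁ q₂ : ℝ) ≤ 6 * (q:ℝ)^2 * (C₀ * ((2:ℝ)*(q:ℝ)^2)^(ε/4))^2 :=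
    hcast.trans (mul_le_mul_of_nonneg_left hsq (by positivity))
  have hred : 6 * (q:ℝ)^2 * (C₀ * ((2:ℝ)*(q:ℝ)^2)^(ε/4))^2
      = (6 * C₀^2 * (2:ℝ)^(ε/2)) * ((q:ℝ) ^ ((2:ℝ) + ε)) := by
    have e1 : (((2:ℝ)*(q:ℝ)^2)^(ε/4))^2 = ((2:ℝ)*(q:ℝ)^2)^(ε/2) := by
      rw [← Real.rpow_natCast (((2:ℝ)*(q:ℝ)^2)^(ε/4)) 2, ← Real.rpow_mul (by positivity)]
      congr 1
      push_cast
      ring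
    have e2 : ((2:ℝ)*(q:ℝ)^2)^(ε/2) = (2:ℝ)^(ε/2) * ((q:ℝ)^2)^(ε/2) :=
      Real.mul_rpow (by norm_num) (by positivity)
    have e3 : (((q:ℝ)^2))^(ε/2) = (q:ℝ)^ε := by
      rw [← Real.rpow_natCast (q:ℝ) 2, ← Real.rpow_mul hq0.le]
      congr 1
      push_cast
      ring
    have e4 : (q:ℝ)^((2:ℝ)+ε) = (q:ℝ)^2 * (q:ℝ)^ε := by
      rw [Real.rpow_add hq0]
      congr 1
      rw [← Real.rpow_natCast (q:ℝ) 2]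
      norm_num
    rw [mul_pow, e1, e2, e3, e4]
    ring
  rw [hred] at hfin
  exact hfin
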